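/- Let Q be a 2×2 rational matrix with Q ≠ 0 and det Q = 0. Write Q = (p/q)·(column vector (α₁, α₂)) · (row vector (β₁, β₂)) with gcd(p,q)=1, q > 0, gcd(α₁,α₂)=1, gcd(β₁,β₂)=1. Then for v = (x,y) ∈ ℤ², Q·v ∈ ℤ² if and only if q ∣ β₁·x + β₂·y, and the subgroup { v ∈ ℤ² : Q·v ∈ ℤ² } has index q in ℤ². -/

import Mathlib

open Matrix

/-- The subgroup of integer vectors `v` with `Q·v` integral. -/
def intLattice (Q : Matrix (Fin 2) (Fin 2) ℚ) : AddSubgroup (Fin 2 → ℤ) where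
  carrier := {v | ∀ i, ∃ n : ℤ, Q.mulVec (fun j => (v j : ℚ)) i = n}
  zero_mem' := by
    intro i
    exact ⟨0, by simp [Matrix.mulVec]⟩
  add_mem' := by
    intro u v hu hv i
    obtain ⟨m, hm⟩ := hu i
    obtain ⟨n, hn⟩ := hv i
    refine ⟨m + n, ?_⟩
    have h : (fun j => (((u + v) j : ℤ) : ℚ)) = (fun j => ((u j : ℤ) : ℚ)) + fun j => ((v j : ℤ) : ℚ) := by
      funext j; simp
    rw [h, Matrix.mulVec_add, Pi.add_apply, hm, hn]
    push_cast; ring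
  neg_mem' := by
    intro v hv i
    obtain ⟨n, hn⟩ := hv i
    refine ⟨-n, ?_⟩
    have h : (fun j => (((-v) j : ℤ) : ℚ)) = -fun j => ((v j : ℤ) : ℚ) := by
      funext j; simp
    rw [h, Matrix.mulVec_neg, Pi.neg_apply, hn]
    push_cast; ring

theorem intLattice_rank_one (Q : Matrix (Fin 2) (Fin 2) ℚ) (hQ : Q ≠ 0)
    (hdet : Q.det = 0)
    (p : ℤ) (q : ℕ) (hq : 0 < q) (hpq : Nat.gcd p.natAbs q = 1)
    (α β : Fin 2 → ℤ)
    (hα : Int.gcd (α 0) (α 1) = 1) (hβ : Int.gcd (β 0) (β 1) = 1)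
    (hfac : Q = ((p : ℚ) / (q : ℚ)) • Matrix.of fun i j => ((α i * β j : ℤ) : ℚ)) :
    (∀ v : Fin 2 → ℤ, v ∈ intLattice Q ↔ (q : ℤ) ∣ β 0 * v 0 + β 1 * v 1) ∧
    (intLattice Q).index = q := by
  haveI : NeZero q := ⟨hq.ne'⟩
  have hq0 : ((q : ℤ) : ℚ) ≠ 0 := by
    push_cast; exact_mod_cast Nat.cast_ne_zero.mpr hq.ne'
  -- mulVec formula
  have hmv : ∀ (v : Fin 2 → ℤ) (i : Fin 2),
      Q.mulVec (fun j => (v j : ℚ)) i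
        = (p : ℚ) / q * α i * ((β 0 * v 0 + β 1 * v 1 : ℤ) : ℚ) := by
    intro v i
    rw [hfac]
    simp [Matrix.mulVec, dotProduct, Fin.sum_univ_two]
    push_cast
    ring
  have key : ∀ v : Fin 2 → ℤ, v ∈ intLattice Q ↔ (q : ℤ) ∣ β 0 * v 0 + β 1 * v 1 := by
    intro v
    set s : ℤ := β 0 * v 0 + β 1 * v 1 with hs
    constructor
    · intro hv
      obtain ⟨a, b, hab⟩ := Int.isCoprime_iff_gcd_eq_one.mpr hα
      obtain ⟨n0, hn0⟩ := hv 0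
      obtain ⟨n1, hn1⟩ := hv 1
      rw [hmv v 0] at hn0
      rw [hmv v 1] at hn1
      have h1 : ((p * s : ℤ) : ℚ) = ((a * n0 + b * n1) * q : ℤ) := by
        push_cast
        have : (p : ℚ) / q * (a * α 0 + b * α 1) * s = (a * n0 + b * n1 : ℚ) := by
          rw [mul_add, add_mul]
          rw [← hn0, ← hn1]
          ring
        have hab' : ((a : ℚ) * α 0 + b * α 1) = 1 := by exact_mod_cast congrArg (Int.cast : ℤ → ℚ) hab
        rw [hab', mul_one] at this
        field_simp at this
        rw [this, mul_comm]
      have h2 : p * s = (a * n0 + b * n1) * q := by exact_mod_cast h1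
      have hcop : IsCoprime (q : ℤ) p := by
        rw [Int.isCoprime_iff_gcd_eq_one]
        simp only [Int.gcd, Int.natAbs_natCast]
        rw [Nat.gcd_comm]; exact hpq
      exact hcop.dvd_of_dvd_mul_left ⟨a * n0 + b * n1, by linarith [h2]⟩
    · rintro ⟨t, ht⟩
      intro i
      refine ⟨p * α i * t, ?_⟩
      rw [hmv v i, ← hs, ht]
      push_cast
      field_simp
  refine ⟨key, ?_⟩
  -- index part
  let f : (Fin 2 → ℤ) →+ ZMod q := AddMonoidHom.mk'
    (fun v => ((β 0 * v 0 + β 1 * v 1 : ℤ) : ZMod q))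
    (by intro u v; simp only [Pi.add_apply]; push_cast; ring)
  have hker : intLattice Q = f.ker := by
    ext v
    rw [AddMonoidHom.mem_ker, key v]
    exact (ZMod.intCast_zmod_eq_zero_iff_dvd _ _).symm
  have hsurj : Function.Surjective f := by
    intro c
    obtain ⟨a, b, hab⟩ := Int.isCoprime_iff_gcd_eq_one.mpr hβ
    obtain ⟨m, hm⟩ : ∃ m : ℤ, (m : ZMod q) = c := ⟨(c.val : ℤ), by simp [ZMod.natCast_val]⟩
    refine ⟨![a * m, b * m], ?_⟩
    show ((β 0 * (a * m) + β 1 * (b * m) : ℤ) : ZMod q) = c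
    have : β 0 * (a * m) + β 1 * (b * m) = (a * β 0 + b * β 1) * m := by ring
    rw [this, hab, one_mul, hm]
  rw [hker, AddSubgroup.index_ker f, AddMonoidHom.range_eq_top.mpr hsurj,
    AddSubgroup.card_top, Nat.card_zmod]
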